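/- The discriminant quadratic form of D₄(2) is v ⊕ v(4), where v is the discriminant form of D₄ (on (ℤ/2ℤ)² with q(e)=q(f)=1, b(e,f)=1/2) and v(4) is the form on (ℤ/4ℤ)² with Gram matrix [[1/2, 1/4],[1/4, 1/2]] (values of q being 1/2 on generators, bilinear value 1/4). -/

import Mathlib

open Matrix

def D4G : Matrix (Fin 4) (Fin 4) ℤ :=
  !![-2,  1,  1,  1;
      1, -2,  0,  0;
      1,  0, -2,  0;
      1,  0,  0, -2]

/-- The ℚ-valued bilinear form of `D₄(2)`, on `ℚ⁴ = D₄(2) ⊗ ℚ`. -/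
def B4Q (x y : Fin 4 → ℚ) : ℚ :=
  2 * (x ⬝ᵥ (D4G.map (fun a : ℤ => (a : ℚ))).mulVec y)

/-- The quadratic form `v` (the discriminant form of `D₄`) on `(ℤ/2ℤ)²`, with
values in `ℚ` (read modulo `2ℤ`): `q(e) = q(f) = 1`, `b(e,f) = 1/2`, i.e.
`q(a,b) = a + b + ab`. -/
def vq (w : Fin 2 → ZMod 2) : ℚ :=
  (((w 0).val + (w 1).val + (w 0).val * (w 1).val : ℕ) : ℚ)

/-- The quadratic form `v(4)` on `(ℤ/4ℤ)²` with Gram matrix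
`[[1/2, 1/4], [1/4, 1/2]]` (read modulo `2ℤ`):
`q(x,y) = (x² + y² + xy)/2`. -/
def v4q (w : Fin 2 → ZMod 4) : ℚ :=
  (((w 0).val ^ 2 + (w 1).val ^ 2 + (w 0).val * (w 1).val : ℕ) : ℚ) / 2

def MQ : Matrix (Fin 4) (Fin 4) ℚ := !![-4,2,2,2; 2,-4,0,0; 2,0,-4,0; 2,0,0,-4]
def EQ : Matrix (Fin 4) (Fin 4) ℚ := !![6,-4,-24,16; -8,6,38,-26; 8,-8,-52,40; -8,8,56,-44]
def SQ : Matrix (Fin 4) (Fin 4) ℚ :=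
  !![3/2, 1, -1/2, -1/2; 0, -1/2, -9/4, -7/4; 1, 1, 1/4, 0; 1, 1, 0, -1/4]

lemma B4Q_eq (x y : Fin 4 → ℚ) : B4Q x y = x ⬝ᵥ MQ.mulVec y := by
  simp [B4Q, MQ, D4G, Matrix.mulVec, dotProduct, Fin.sum_univ_four, Matrix.vecHead,
    Matrix.vecTail]
  push_cast
  ring

lemma MQ_symm (x y : Fin 4 → ℚ) : x ⬝ᵥ MQ.mulVec y = MQ.mulVec x ⬝ᵥ y := by
  simp [MQ, Matrix.mulVec, dotProduct, Fin.sum_univ_four, Matrix.vecHead, Matrix.vecTail]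
  ring

lemma recon (x : Fin 4 → ℚ) : SQ.mulVec (EQ.mulVec x) = x := by
  funext i
  fin_cases i <;>
    (simp [SQ, EQ, Matrix.mulVec, dotProduct, Fin.sum_univ_four, Matrix.vecHead,
      Matrix.vecTail]; ring)

lemma proj (v : Fin 4 → ℚ) : EQ.mulVec (SQ.mulVec v) = v := by
  funext i
  fin_cases i <;>
    (simp [SQ, EQ, Matrix.mulVec, dotProduct, Fin.sum_univ_four, Matrix.vecHead,
      Matrix.vecTail]; ring)

lemma cvec_as (x : Fin 4 → ℚ) :
    EQ.mulVec x = ![ (MQ.mulVec x 1) + 6*(MQ.mulVec x 2) - 4*(MQ.mulVec x 3),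
      -(MQ.mulVec x 0) - 2*(MQ.mulVec x 1) - 10*(MQ.mulVec x 2) + 6*(MQ.mulVec x 3),
      2*(MQ.mulVec x 0) + 3*(MQ.mulVec x 1) + 14*(MQ.mulVec x 2) - 9*(MQ.mulVec x 3),
      -2*(MQ.mulVec x 0) - 3*(MQ.mulVec x 1) - 15*(MQ.mulVec x 2) + 10*(MQ.mulVec x 3) ] := by
  funext i
  fin_cases i <;>
    (simp [EQ, MQ, Matrix.mulVec, dotProduct, Fin.sum_univ_four, Matrix.vecHead,
      Matrix.vecTail]; ring)

lemma mulVec_SQ (v : Fin 4 → ℚ) :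
    MQ.mulVec (SQ.mulVec v) = ![ -2*v 0 - v 1 - 2*v 2 - 2*v 3,
      3*v 0 + 4*v 1 + 8*v 2 + 6*v 3,
      -v 0 - 2*v 1 - 2*v 2 - v 3,
      -v 0 - 2*v 1 - v 2 ] := by
  funext i
  fin_cases i <;>
    (simp [SQ, MQ, Matrix.mulVec, dotProduct, Fin.sum_univ_four, Matrix.vecHead,
      Matrix.vecTail]; ring)

lemma quad (c : Fin 4 → ℚ) :
    SQ.mulVec c ⬝ᵥ MQ.mulVec (SQ.mulVec c) =
      (-20*(c 0)^2 - 28*(c 1)^2 - 70*(c 2)^2 - 38*(c 3)^2 - 44*(c 0)*(c 1)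
        - 48*(c 0)*(c 2) - 32*(c 0)*(c 3) - 72*(c 1)*(c 2) - 48*(c 1)*(c 3)
        - 102*(c 2)*(c 3)) / 4 := by
  simp [SQ, MQ, Matrix.mulVec, dotProduct, Fin.sum_univ_four, Matrix.vecHead,
    Matrix.vecTail]
  ring

def Fq (n0 n1 n2 n3 : ℤ) : ℤ :=
  -20*n0^2 - 28*n1^2 - 70*n2^2 - 38*n3^2 - 44*n0*n1 - 48*n0*n2 - 32*n0*n3
    - 72*n1*n2 - 48*n1*n3 - 102*n2*n3

def Gq (r0 r1 r2 r3 : ℤ) : ℤ :=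
  4*r0 + 4*r1 + 4*r0*r1 + 2*r2^2 + 2*r3^2 + 2*r2*r3

lemma key (n0 n1 n2 n3 : ℤ) :
    (8:ℤ) ∣ Fq n0 n1 n2 n3 - Gq (n0 % 2) (n1 % 2) (n2 % 4) (n3 % 4) := by
  set r0 := n0 % 2 with hr0def
  set r1 := n1 % 2 with hr1def
  set r2 := n2 % 4 with hr2def
  set r3 := n3 % 4 with hr3def
  obtain ⟨m0, hm0⟩ : ∃ m, n0 = 2*m + r0 := ⟨n0/2, by omega⟩
  obtain ⟨m1, hm1⟩ : ∃ m, n1 = 2*m + r1 := ⟨n1/2, by omega⟩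
  obtain ⟨m2, hm2⟩ : ∃ m, n2 = 4*m + r2 := ⟨n2/4, by omega⟩
  obtain ⟨m3, hm3⟩ : ∃ m, n3 = 4*m + r3 := ⟨n3/4, by omega⟩
  have hb0 : 0 ≤ r0 := Int.emod_nonneg _ (by norm_num)
  have hb0' : r0 < 2 := Int.emod_lt_of_pos _ (by norm_num)
  have hb1 : 0 ≤ r1 := Int.emod_nonneg _ (by norm_num)
  have hb1' : r1 < 2 := Int.emod_lt_of_pos _ (by norm_num)
  have hb2 : 0 ≤ r2 := Int.emod_nonneg _ (by norm_num)
  have hb2' : r2 < 4 := Int.emod_lt_of_pos _ (by norm_num)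
  have hb3 : 0 ≤ r3 := Int.emod_nonneg _ (by norm_num)
  have hb3' : r3 < 4 := Int.emod_lt_of_pos _ (by norm_num)
  clear_value r0 r1 r2 r3
  rw [hm0, hm1, hm2, hm3]
  have hid : Fq (2*m0+r0) (2*m1+r1) (4*m2+r2) (4*m3+r3) - Gq r0 r1 r2 r3 =
      8 * (-10*m0^2 - 14*m1^2 - 140*m2^2 - 76*m3^2
        - 22*m0*m1 - 48*m0*m2 - 32*m0*m3 - 72*m1*m2 - 48*m1*m3 - 204*m2*m3
        - 10*m0*r0 - 11*m0*r1 - 12*m0*r2 - 8*m0*r3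
        - 11*m1*r0 - 14*m1*r1 - 18*m1*r2 - 12*m1*r3
        - 24*m2*r0 - 36*m2*r1 - 70*m2*r2 - 51*m2*r3
        - 16*m3*r0 - 24*m3*r1 - 51*m3*r2 - 38*m3*r3)
      + (Fq r0 r1 r2 r3 - Gq r0 r1 r2 r3) := by
    simp only [Fq, Gq]; ring
  rw [hid]
  refine dvd_add (dvd_mul_right 8 _) ?_
  interval_cases r0 <;> interval_cases r1 <;> interval_cases r2 <;> interval_cases r3 <;>
    norm_num [Fq, Gq]

/-- The discriminant quadratic form of `D₄(2)` is `v ⊕ v(4)`: the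
discriminant group `A = L*/L` of `L = D₄(2)` is isomorphic to `(ℤ/2ℤ)² × (ℤ/4ℤ)²`
via an isomorphism carrying the discriminant quadratic form `q(x) = (x,x) mod 2ℤ`
to the form `v ⊕ v(4)`. -/
theorem stmt_15
    (Lint Ldual : Submodule ℤ (Fin 4 → ℚ))
    (hLint : ∀ x, x ∈ Lint ↔ ∀ i, ∃ n : ℤ, x i = n)
    (hLdual : ∀ x, x ∈ Ldual ↔ ∀ y ∈ Lint, ∃ n : ℤ, B4Q x y = n)
    (hle : Lint ≤ Ldual) :
    ∃ φ : (↥Ldual ⧸ Submodule.comap Ldual.subtype Lint) ≃+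
        ((Fin 2 → ZMod 2) × (Fin 2 → ZMod 4)),
      ∀ x : ↥Ldual, ∃ n : ℤ,
        B4Q (x : Fin 4 → ℚ) (x : Fin 4 → ℚ) =
          vq (φ (Submodule.Quotient.mk x)).1 +
          v4q (φ (Submodule.Quotient.mk x)).2 + 2 * n := by
  classical
  -- standard basis vectors are in Lint
  have hsingle : ∀ j : Fin 4, Pi.single j (1:ℚ) ∈ Lint := by
    intro j
    rw [hLint]
    intro i
    refine ⟨if i = j then 1 else 0, ?_⟩
    rw [Pi.single_apply]
    split <;> simp
  -- for x in Ldual, MQ.mulVec x has integer entries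
  have hMint : ∀ x ∈ Ldual, ∀ j : Fin 4, ∃ n : ℤ, MQ.mulVec x j = n := by
    intro x hx j
    obtain ⟨n, hn⟩ := (hLdual x).1 hx _ (hsingle j)
    refine ⟨n, ?_⟩
    rw [← hn, B4Q_eq, MQ_symm]
    simp [dotProduct_single]
  -- for x in Ldual, EQ.mulVec x has integer entries
  have hcint : ∀ x ∈ Ldual, ∀ i : Fin 4, ∃ n : ℤ, EQ.mulVec x i = n := by
    intro x hx i
    obtain ⟨a0, h0⟩ := hMint x hx 0
    obtain ⟨a1, h1⟩ := hMint x hx 1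
    obtain ⟨a2, h2⟩ := hMint x hx 2
    obtain ⟨a3, h3⟩ := hMint x hx 3
    rw [cvec_as]
    fin_cases i
    · exact ⟨a1 + 6*a2 - 4*a3, by simp [h0, h1, h2, h3] <;> (push_cast; ring)⟩
    · exact ⟨-a0 - 2*a1 - 10*a2 + 6*a3, by simp [h0, h1, h2, h3] <;> (push_cast; ring)⟩
    · exact ⟨2*a0 + 3*a1 + 14*a2 - 9*a3, by simp [h0, h1, h2, h3] <;> (push_cast; ring)⟩
    · exact ⟨-2*a0 - 3*a1 - 15*a2 + 10*a3, by simp [h0, h1, h2, h3] <;> (push_cast; ring)⟩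
  -- integer coordinates
  set nn : ↥Ldual → Fin 4 → ℤ := fun x i => (EQ.mulVec (x : Fin 4 → ℚ) i).num with hnndef
  have hnn : ∀ (x : ↥Ldual) (i : Fin 4), ((nn x i : ℤ) : ℚ) = EQ.mulVec (x : Fin 4 → ℚ) i := by
    intro x i
    obtain ⟨n, hn⟩ := hcint (x : Fin 4 → ℚ) x.2 i
    simp only [hnndef, hn, Rat.num_intCast]
  set f : ↥Ldual → (Fin 2 → ZMod 2) × (Fin 2 → ZMod 4) :=
    fun x => (![(nn x 0 : ZMod 2), (nn x 1 : ZMod 2)],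
              ![(nn x 2 : ZMod 4), (nn x 3 : ZMod 4)]) with hfdef
  have hnn_add : ∀ (a b : ↥Ldual) (i : Fin 4), nn (a+b) i = nn a i + nn b i := by
    intro a b i
    have : ((nn (a+b) i : ℤ) : ℚ) = ((nn a i + nn b i : ℤ) : ℚ) := by
      push_cast
      rw [hnn, hnn, hnn]
      have : ((a + b : ↥Ldual) : Fin 4 → ℚ) = (a : Fin 4 → ℚ) + (b : Fin 4 → ℚ) := rfl
      rw [this, Matrix.mulVec_add]
      simp
    exact_mod_cast this
  have hf_add : ∀ a b : ↥Ldual, f (a + b) = f a + f b := by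
    intro a b
    simp only [hfdef]
    refine Prod.ext ?_ ?_ <;> funext j <;> fin_cases j <;>
      simp [hnn_add] <;> push_cast <;> ring
  set fhom : ↥Ldual →+ ((Fin 2 → ZMod 2) × (Fin 2 → ZMod 4)) :=
    AddMonoidHom.mk' f hf_add with hfhomdef
  -- x recovered from its coordinates
  have hrecon : ∀ x : ↥Ldual, SQ.mulVec (fun i => ((nn x i : ℤ) : ℚ)) = (x : Fin 4 → ℚ) := by
    intro x
    have h1 : (fun i => ((nn x i : ℤ) : ℚ)) = EQ.mulVec (x : Fin 4 → ℚ) := by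
      funext i; exact hnn x i
    rw [h1, recon]
  -- kernel direction 1 : Lint ⊆ ker f
  have hker1 : ∀ x : ↥Ldual, (x : Fin 4 → ℚ) ∈ Lint → fhom x = 0 := by
    intro x hx
    choose k hk using (hLint _).1 hx
    have hc0 : ∃ m : ℤ, nn x 0 = 2 * m := by
      refine ⟨3*k 0 - 2*k 1 - 12*k 2 + 8*k 3, ?_⟩
      have : ((nn x 0 : ℤ) : ℚ) = ((2 * (3*k 0 - 2*k 1 - 12*k 2 + 8*k 3) : ℤ) : ℚ) := by
        rw [hnn]
        simp [EQ, Matrix.mulVec, dotProduct, Fin.sum_univ_four, Matrix.vecHead,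
          Matrix.vecTail, hk 0, hk 1, hk 2, hk 3]
        push_cast; ring
      exact_mod_cast this
    have hc1 : ∃ m : ℤ, nn x 1 = 2 * m := by
      refine ⟨-4*k 0 + 3*k 1 + 19*k 2 - 13*k 3, ?_⟩
      have : ((nn x 1 : ℤ) : ℚ) = ((2 * (-4*k 0 + 3*k 1 + 19*k 2 - 13*k 3) : ℤ) : ℚ) := by
        rw [hnn]
        simp [EQ, Matrix.mulVec, dotProduct, Fin.sum_univ_four, Matrix.vecHead,
          Matrix.vecTail, hk 0, hk 1, hk 2, hk 3]
        push_cast; ring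
      exact_mod_cast this
    have hc2 : ∃ m : ℤ, nn x 2 = 4 * m := by
      refine ⟨2*k 0 - 2*k 1 - 13*k 2 + 10*k 3, ?_⟩
      have : ((nn x 2 : ℤ) : ℚ) = ((4 * (2*k 0 - 2*k 1 - 13*k 2 + 10*k 3) : ℤ) : ℚ) := by
        rw [hnn]
        simp [EQ, Matrix.mulVec, dotProduct, Fin.sum_univ_four, Matrix.vecHead,
          Matrix.vecTail, hk 0, hk 1, hk 2, hk 3]
        push_cast; ring
      exact_mod_cast this
    have hc3 : ∃ m : ℤ, nn x 3 = 4 * m := by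
      refine ⟨-2*k 0 + 2*k 1 + 14*k 2 - 11*k 3, ?_⟩
      have : ((nn x 3 : ℤ) : ℚ) = ((4 * (-2*k 0 + 2*k 1 + 14*k 2 - 11*k 3) : ℤ) : ℚ) := by
        rw [hnn]
        simp [EQ, Matrix.mulVec, dotProduct, Fin.sum_univ_four, Matrix.vecHead,
          Matrix.vecTail, hk 0, hk 1, hk 2, hk 3]
        push_cast; ring
      exact_mod_cast this
    obtain ⟨m0, hm0⟩ := hc0
    obtain ⟨m1, hm1⟩ := hc1
    obtain ⟨m2, hm2⟩ := hc2
    obtain ⟨m3, hm3⟩ := hc3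
    have e0 : ((nn x 0 : ℤ) : ZMod 2) = 0 := by
      rw [hm0]; exact_mod_cast (ZMod.intCast_zmod_eq_zero_iff_dvd _ 2).2 ⟨m0, by push_cast; ring⟩
    have e1 : ((nn x 1 : ℤ) : ZMod 2) = 0 := by
      rw [hm1]; exact_mod_cast (ZMod.intCast_zmod_eq_zero_iff_dvd _ 2).2 ⟨m1, by push_cast; ring⟩
    have e2 : ((nn x 2 : ℤ) : ZMod 4) = 0 := by
      rw [hm2]; exact_mod_cast (ZMod.intCast_zmod_eq_zero_iff_dvd _ 4).2 ⟨m2, by push_cast; ring⟩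
    have e3 : ((nn x 3 : ℤ) : ZMod 4) = 0 := by
      rw [hm3]; exact_mod_cast (ZMod.intCast_zmod_eq_zero_iff_dvd _ 4).2 ⟨m3, by push_cast; ring⟩
    show f x = 0
    simp only [hfdef]
    refine Prod.ext ?_ ?_ <;> funext j <;> fin_cases j <;> simp [e0, e1, e2, e3]
  -- kernel direction 2 : ker f ⊆ Lint
  have hker2 : ∀ x : ↥Ldual, fhom x = 0 → (x : Fin 4 → ℚ) ∈ Lint := by
    intro x hx
    have hx' : f x = 0 := hx
    simp only [hfdef, Prod.ext_iff, funext_iff] at hx'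
    have e0 : ((nn x 0 : ℤ) : ZMod 2) = 0 := by simpa using hx'.1 0
    have e1 : ((nn x 1 : ℤ) : ZMod 2) = 0 := by simpa using hx'.1 1
    have e2 : ((nn x 2 : ℤ) : ZMod 4) = 0 := by simpa using hx'.2 0
    have e3 : ((nn x 3 : ℤ) : ZMod 4) = 0 := by simpa using hx'.2 1
    obtain ⟨m0, hm0⟩ : (2:ℤ) ∣ nn x 0 := by exact_mod_cast (ZMod.intCast_zmod_eq_zero_iff_dvd _ 2).1 e0
    obtain ⟨m1, hm1⟩ : (2:ℤ) ∣ nn x 1 := by exact_mod_cast (ZMod.intCast_zmod_eq_zero_iff_dvd _ 2).1 e1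
    obtain ⟨m2, hm2⟩ : (4:ℤ) ∣ nn x 2 := by exact_mod_cast (ZMod.intCast_zmod_eq_zero_iff_dvd _ 4).1 e2
    obtain ⟨m3, hm3⟩ : (4:ℤ) ∣ nn x 3 := by exact_mod_cast (ZMod.intCast_zmod_eq_zero_iff_dvd _ 4).1 e3
    rw [hLint]
    intro j
    have hxe : (x : Fin 4 → ℚ) j = SQ.mulVec (fun i => ((nn x i : ℤ) : ℚ)) j :=
      (congrFun (hrecon x) j).symm
    fin_cases j
    · refine ⟨3*m0 + 2*m1 - 2*m2 - 2*m3, ?_⟩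
      rw [hxe]
      simp [SQ, Matrix.mulVec, dotProduct, Fin.sum_univ_four, Matrix.vecHead,
        Matrix.vecTail, hm0, hm1, hm2, hm3]
      try (push_cast; ring)
    · refine ⟨-m1 - 9*m2 - 7*m3, ?_⟩
      rw [hxe]
      simp [SQ, Matrix.mulVec, dotProduct, Fin.sum_univ_four, Matrix.vecHead,
        Matrix.vecTail, hm0, hm1, hm2, hm3]
      try (push_cast; ring)
    · refine ⟨2*m0 + 2*m1 + m2, ?_⟩
      rw [hxe]
      simp [SQ, Matrix.mulVec, dotProduct, Fin.sum_univ_four, Matrix.vecHead,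
        Matrix.vecTail, hm0, hm1, hm2, hm3]
      try (push_cast; ring)
    · refine ⟨2*m0 + 2*m1 - m3, ?_⟩
      rw [hxe]
      simp [SQ, Matrix.mulVec, dotProduct, Fin.sum_univ_four, Matrix.vecHead,
        Matrix.vecTail, hm0, hm1, hm2, hm3]
      try (push_cast; ring)
  -- quotient plumbing
  have hker_le : Submodule.comap Ldual.subtype Lint ≤ LinearMap.ker fhom.toIntLinearMap := by
    intro x hx
    exact hker1 x hx
  set φ₀ : (↥Ldual ⧸ Submodule.comap Ldual.subtype Lint) →ₗ[ℤ]
      ((Fin 2 → ZMod 2) × (Fin 2 → ZMod 4)) :=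
    Submodule.liftQ _ fhom.toIntLinearMap hker_le with hphi0def
  have hφ₀mk : ∀ x : ↥Ldual, φ₀ (Submodule.Quotient.mk x) = f x := by
    intro x
    rfl
  have hinj : Function.Injective φ₀ := by
    have hbot : LinearMap.ker φ₀ = ⊥ := by
      rw [hphi0def]
      exact Submodule.ker_liftQ_eq_bot _ fhom.toIntLinearMap hker_le
        (fun x hx => Submodule.mem_comap.2 (hker2 x hx))
    exact LinearMap.ker_eq_bot.1 hbot
  have hsurj : Function.Surjective φ₀ := by
    rintro ⟨a, b⟩
    set v : Fin 4 → ℚ := ![((a 0).val : ℚ), ((a 1).val : ℚ), ((b 0).val : ℚ), ((b 1).val : ℚ)]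
      with hvdef
    have hxdual : SQ.mulVec v ∈ Ldual := by
      rw [hLdual]
      intro y hy
      choose ky hky using (hLint y).1 hy
      refine ⟨(-2*((a 0).val : ℤ) - ((a 1).val : ℤ) - 2*((b 0).val : ℤ) - 2*((b 1).val : ℤ)) * ky 0
        + (3*((a 0).val : ℤ) + 4*((a 1).val : ℤ) + 8*((b 0).val : ℤ) + 6*((b 1).val : ℤ)) * ky 1
        + (-((a 0).val : ℤ) - 2*((a 1).val : ℤ) - 2*((b 0).val : ℤ) - ((b 1).val : ℤ)) * ky 2
        + (-((a 0).val : ℤ) - 2*((a 1).val : ℤ) - ((b 0).val : ℤ)) * ky 3, ?_⟩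
      rw [B4Q_eq, MQ_symm, mulVec_SQ]
      simp [dotProduct, Fin.sum_univ_four, hvdef, hky 0, hky 1, hky 2, hky 3,
        Matrix.vecHead, Matrix.vecTail]
      try (push_cast; ring)
    refine ⟨Submodule.Quotient.mk ⟨SQ.mulVec v, hxdual⟩, ?_⟩
    rw [hφ₀mk]
    have hproj := proj v
    have h0 : nn ⟨SQ.mulVec v, hxdual⟩ 0 = ((a 0).val : ℤ) := by
      show (EQ.mulVec (SQ.mulVec v) 0).num = _
      rw [hproj]
      simp [hvdef]
      rw [← ZMod.intCast_cast]
      exact Rat.num_intCast _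
    have h1 : nn ⟨SQ.mulVec v, hxdual⟩ 1 = ((a 1).val : ℤ) := by
      show (EQ.mulVec (SQ.mulVec v) 1).num = _
      rw [hproj]
      simp [hvdef]
      rw [← ZMod.intCast_cast]
      exact Rat.num_intCast _
    have h2 : nn ⟨SQ.mulVec v, hxdual⟩ 2 = ((b 0).val : ℤ) := by
      show (EQ.mulVec (SQ.mulVec v) 2).num = _
      rw [hproj]
      simp [hvdef]
      rw [← ZMod.intCast_cast]
      exact Rat.num_intCast _
    have h3 : nn ⟨SQ.mulVec v, hxdual⟩ 3 = ((b 1).val : ℤ) := by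
      show (EQ.mulVec (SQ.mulVec v) 3).num = _
      rw [hproj]
      simp [hvdef]
      rw [← ZMod.intCast_cast]
      exact Rat.num_intCast _
    simp only [hfdef]
    refine Prod.ext ?_ ?_ <;> funext j <;> fin_cases j
    · simp only [h0]
      push_cast
      simpa using ZMod.natCast_rightInverse (a 0)
    · simp only [h1]
      push_cast
      simpa using ZMod.natCast_rightInverse (a 1)
    · simp only [h2]
      push_cast
      simpa using ZMod.natCast_rightInverse (b 0)
    · simp only [h3]
      push_cast
      simpa using ZMod.natCast_rightInverse (b 1)
  set e := LinearEquiv.ofBijective φ₀ ⟨hinj, hsurj⟩ with hedef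
  refine ⟨e.toAddEquiv, ?_⟩
  intro x
  have hφmk : e.toAddEquiv (Submodule.Quotient.mk x) = f x := by
    show e (Submodule.Quotient.mk x) = f x
    exact hφ₀mk x
  obtain ⟨kk, hkk⟩ := key (nn x 0) (nn x 1) (nn x 2) (nn x 3)
  refine ⟨kk, ?_⟩
  have hq := quad (fun i => ((nn x i : ℤ) : ℚ))
  rw [hrecon x] at hq
  have hBxx : B4Q (x : Fin 4 → ℚ) (x : Fin 4 → ℚ) =
      ((Fq (nn x 0) (nn x 1) (nn x 2) (nn x 3) : ℤ) : ℚ) / 4 := by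
    rw [B4Q_eq, hq]
    simp only [Fq]
    push_cast
    ring
  have hv0 : ((((nn x 0 : ℤ) : ZMod 2)).val : ℚ) = ((nn x 0 % 2 : ℤ) : ℚ) := by
    exact_mod_cast congrArg (fun z : ℤ => (z : ℚ)) (ZMod.val_intCast (n := 2) (nn x 0))
  have hv1 : ((((nn x 1 : ℤ) : ZMod 2)).val : ℚ) = ((nn x 1 % 2 : ℤ) : ℚ) := by
    exact_mod_cast congrArg (fun z : ℤ => (z : ℚ)) (ZMod.val_intCast (n := 2) (nn x 1))
  have hv2 : ((((nn x 2 : ℤ) : ZMod 4)).val : ℚ) = ((nn x 2 % 4 : ℤ) : ℚ) := by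
    exact_mod_cast congrArg (fun z : ℤ => (z : ℚ)) (ZMod.val_intCast (n := 4) (nn x 2))
  have hv3 : ((((nn x 3 : ℤ) : ZMod 4)).val : ℚ) = ((nn x 3 % 4 : ℤ) : ℚ) := by
    exact_mod_cast congrArg (fun z : ℤ => (z : ℚ)) (ZMod.val_intCast (n := 4) (nn x 3))
  have hFG : ((Fq (nn x 0) (nn x 1) (nn x 2) (nn x 3) : ℤ) : ℚ) =
      ((Gq (nn x 0 % 2) (nn x 1 % 2) (nn x 2 % 4) (nn x 3 % 4) : ℤ) : ℚ) + 8 * (kk : ℚ) := by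
    have h' : Fq (nn x 0) (nn x 1) (nn x 2) (nn x 3) =
        Gq (nn x 0 % 2) (nn x 1 % 2) (nn x 2 % 4) (nn x 3 % 4) + 8 * kk := by
      omega
    exact_mod_cast congrArg (fun z : ℤ => (z : ℚ)) h'
  rw [hφmk, hBxx, hFG]
  simp only [hfdef, vq, v4q, Gq, Matrix.cons_val_zero, Matrix.cons_val_one, Matrix.head_cons]
  push_cast
  rw [hv0, hv1, hv2, hv3]
  push_cast
  ring
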